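/- Consider the IRL1 method with line search: sequences x^k ∈ ℝ^n and ε^k ∈ ℝ^n with positive entries such that ε^{k+1} ≤ μ ε^k componentwise, for each k the point x^{k+1} is a global minimizer of G(x; x^k, ε^k) := Q_k(x) + λ Σ_{i=1}^n w(x_i^k, ε_i^k)|x_i| with Q_k differentiable, ∇Q_k(x^k) = ∇f(x^k), Q_k M-strongly convex (M > 0) and ∇Q_k L-Lipschitz, and the line-search condition f(x^k) − f(x^{k+1}) ≥ Q_k(x^k) − Q_k(x^{k+1}) + γ‖x^k − x^{k+1}‖² holds with a fixed γ > 0. If the level set {x : F(x) ≤ F(x^0, ε^0)} is bounded, then F(x, ε) is monotonically nonincreasing over the iterates, F(x^0, ε^0) − F(x^k, ε^k) ≥ γ Σ_{t=0}^{k−1} ‖x^{t+1} − x^t‖² for all k, ‖x^{k+1} − x^k‖ → 0, and there exists C > 0 with ‖∇Q_k(x^{k+1})‖_∞ ≤ C for all k. -/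

import Mathlib

open Filter Topology

/-- The weight function `w(t, s) = p(|t| + s)^(p-1)`. -/
noncomputable def wfun (p t s : ℝ) : ℝ := p * (|t| + s) ^ (p - 1)

/-- The IRL1 setting with line search (Algorithm 2.2 of the paper): fixed data
`p ∈ (0,1)`, `λ > 0`, `μ ∈ (0,1)`, `γ > 0`, a differentiable `f` with
`Lf`-Lipschitz gradient (`Lf ≥ 0`), iterates `x^k`, positive parameters `ε^k` with
`ε^{k+1} ≤ μ ε^k` componentwise; for each `k` a differentiable model `Q_k` with
`∇Q_k(x^k) = ∇f(x^k)`, `M`-strongly convex with `M > 0` (meaning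
`z ↦ Q_k z - (M/2)‖z‖²` is convex), `∇Q_k` `L`-Lipschitz, such that `x^{k+1}`
globally minimizes `G(·; x^k, ε^k) = Q_k(·) + λ Σᵢ w(xᵢ^k, εᵢ^k)|·ᵢ|` and the
line-search condition
`f(x^k) - f(x^{k+1}) ≥ Q_k(x^k) - Q_k(x^{k+1}) + γ‖x^k - x^{k+1}‖²` holds. -/
structure IRL1LS (n : ℕ) where
  p : ℝ
  lam : ℝ
  mu : ℝ
  gam : ℝ
  Lf : ℝ
  M : ℝ
  L : ℝ
  f : EuclideanSpace ℝ (Fin n) → ℝ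
  x : ℕ → EuclideanSpace ℝ (Fin n)
  eps : ℕ → Fin n → ℝ
  Q : ℕ → EuclideanSpace ℝ (Fin n) → ℝ
  hp0 : 0 < p
  hp1 : p < 1
  hlam : 0 < lam
  hmu0 : 0 < mu
  hmu1 : mu < 1
  hgam : 0 < gam
  hLf : 0 ≤ Lf
  hM : 0 < M
  hf_diff : Differentiable ℝ f
  hf_lip : ∀ a b, ‖gradient f a - gradient f b‖ ≤ Lf * ‖a - b‖
  heps_pos : ∀ k i, 0 < eps k i
  heps_dec : ∀ k i, eps (k + 1) i ≤ mu * eps k i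
  hQ_diff : ∀ k, Differentiable ℝ (Q k)
  hQ_grad : ∀ k, gradient (Q k) (x k) = gradient f (x k)
  hQ_sconv : ∀ k, ConvexOn ℝ Set.univ (fun z => Q k z - M / 2 * ‖z‖ ^ 2)
  hQ_lip : ∀ k a b, ‖gradient (Q k) a - gradient (Q k) b‖ ≤ L * ‖a - b‖
  hmin : ∀ k, ∀ z : EuclideanSpace ℝ (Fin n),
    Q k (x (k + 1)) + lam * ∑ i, wfun p (x k i) (eps k i) * |x (k + 1) i|
      ≤ Q k z + lam * ∑ i, wfun p (x k i) (eps k i) * |z i|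
  hls : ∀ k, f (x k) - f (x (k + 1)) ≥
    Q k (x k) - Q k (x (k + 1)) + gam * ‖x k - x (k + 1)‖ ^ 2

/-- The smoothed objective `F(x, ε) = f(x) + λ Σᵢ (|xᵢ| + εᵢ)^p`. -/
noncomputable def IRL1LS.Feps {n : ℕ} (S : IRL1LS n)
    (z : EuclideanSpace ℝ (Fin n)) (e : Fin n → ℝ) : ℝ :=
  S.f z + S.lam * ∑ i, (|z i| + e i) ^ S.p

/-- The objective `F(x) = f(x) + λ Σᵢ |xᵢ|^p`. -/
noncomputable def IRL1LS.Fobj {n : ℕ} (S : IRL1LS n) (z : EuclideanSpace ℝ (Fin n)) : ℝ :=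
  S.f z + S.lam * ∑ i, |z i| ^ S.p


private lemma rpow_tangent {p u v : ℝ} (hp0 : 0 < p) (hp1 : p ≤ 1) (hu : 0 < u) (hv : 0 ≤ v) :
    v ^ p ≤ u ^ p + p * u ^ (p - 1) * (v - u) := by
  have hs : -1 ≤ (v - u) / u := by
    rw [neg_le, ← neg_div, div_le_one hu]; linarith
  have hb := rpow_one_add_le_one_add_mul_self hs hp0.le hp1
  have hv' : v = u * (1 + (v - u) / u) := by field_simp; ring
  calc v ^ p = (u * (1 + (v - u) / u)) ^ p := by rw [← hv']
    _ = u ^ p * (1 + (v - u) / u) ^ p := Real.mul_rpow hu.le (by linarith)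
    _ ≤ u ^ p * (1 + p * ((v - u) / u)) :=
        mul_le_mul_of_nonneg_left hb (Real.rpow_nonneg hu.le p)
    _ = u ^ p + p * u ^ (p - 1) * (v - u) := by
        rw [Real.rpow_sub_one hu.ne' p]; field_simp

private lemma coord_le_norm {n : ℕ} (g : EuclideanSpace ℝ (Fin n)) (i : Fin n) :
    |g i| ≤ ‖g‖ := by
  rw [EuclideanSpace.norm_eq, ← Real.sqrt_sq_eq_abs]
  apply Real.sqrt_le_sqrt
  have h : ‖g i‖ ^ 2 = g i ^ 2 := by rw [Real.norm_eq_abs, sq_abs]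
  rw [← h]
  exact Finset.single_le_sum (fun j _ => sq_nonneg ‖g j‖) (Finset.mem_univ i)

private lemma descent {n : ℕ} (S : IRL1LS n) (k : ℕ) :
    S.Feps (S.x (k + 1)) (S.eps (k + 1)) ≤
      S.Feps (S.x k) (S.eps k) - S.gam * ‖S.x (k + 1) - S.x k‖ ^ 2 := by
  have hp0 := S.hp0
  have hp1 := S.hp1
  set A := ∑ i, (|S.x (k + 1) i| + S.eps (k + 1) i) ^ S.p with hA
  set B := ∑ i, (|S.x (k + 1) i| + S.eps k i) ^ S.p with hB
  set Cs := ∑ i, (|S.x k i| + S.eps k i) ^ S.p with hC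
  set W1 := ∑ i, wfun S.p (S.x k i) (S.eps k i) * |S.x (k + 1) i| with hW1
  set W0 := ∑ i, wfun S.p (S.x k i) (S.eps k i) * |S.x k i| with hW0
  have h1 : A ≤ B := by
    apply Finset.sum_le_sum
    intro i _
    have h := S.heps_dec k i
    have h2 := S.heps_pos k i
    have h3 := S.heps_pos (k + 1) i
    have : S.eps (k + 1) i ≤ S.eps k i := by nlinarith [S.hmu1]
    exact Real.rpow_le_rpow (by positivity) (by linarith) hp0.le
  have h2 : B ≤ Cs + (W1 - W0) := by
    have hle := Finset.sum_le_sum (f := fun i => (|S.x (k + 1) i| + S.eps k i) ^ S.p)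
      (g := fun i => (|S.x k i| + S.eps k i) ^ S.p +
        (wfun S.p (S.x k i) (S.eps k i) * |S.x (k + 1) i| -
         wfun S.p (S.x k i) (S.eps k i) * |S.x k i|))
      (s := Finset.univ) ?_
    · simpa [hB, hC, hW1, hW0, Finset.sum_add_distrib, Finset.sum_sub_distrib] using hle
    intro i _
    have hu : 0 < |S.x k i| + S.eps k i := by
      have := S.heps_pos k i; have := abs_nonneg (S.x k i); linarith
    have hv : (0:ℝ) ≤ |S.x (k + 1) i| + S.eps k i := by
      have := S.heps_pos k i; have := abs_nonneg (S.x (k + 1) i); linarith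
    have ht := rpow_tangent hp0 hp1.le hu hv
    simp only [wfun]
    nlinarith [ht]
  have h3 := S.hmin k (S.x k)
  have h4 := S.hls k
  rw [norm_sub_rev] at h4
  have hl1 : S.lam * A ≤ S.lam * B := mul_le_mul_of_nonneg_left h1 S.hlam.le
  have hl2 : S.lam * B ≤ S.lam * Cs + (S.lam * W1 - S.lam * W0) := by
    have hm := mul_le_mul_of_nonneg_left h2 S.hlam.le
    nlinarith [hm]
  simp only [IRL1LS.Feps, ← hA, ← hC]
  rw [← hW1, ← hW0] at h3
  linarith

private lemma Fobj_le_Feps {n : ℕ} (S : IRL1LS n) (z : EuclideanSpace ℝ (Fin n))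
    (e : Fin n → ℝ) (he : ∀ i, 0 < e i) : S.Fobj z ≤ S.Feps z e := by
  unfold IRL1LS.Fobj IRL1LS.Feps
  have h : ∑ i, |z i| ^ S.p ≤ ∑ i, (|z i| + e i) ^ S.p := by
    apply Finset.sum_le_sum
    intro i _
    exact Real.rpow_le_rpow (abs_nonneg _) (by linarith [he i]) S.hp0.le
  nlinarith [mul_le_mul_of_nonneg_left h S.hlam.le]

/-- For the IRL1 method with line search, if the level set
`{x : F(x) ≤ F(x⁰, ε⁰)}` is bounded, then `F(x, ε)` is monotonically nonincreasing
over the iterates, `F(x⁰, ε⁰) - F(x^k, ε^k) ≥ γ Σ_{t<k} ‖x^{t+1} - x^t‖²` for all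
`k`, `‖x^{k+1} - x^k‖ → 0`, and there is `C > 0` with `‖∇Q_k(x^{k+1})‖_∞ ≤ C`
for all `k`. -/
theorem stmt18 {n : ℕ} (S : IRL1LS n)
    (hbdd : Bornology.IsBounded
      {z : EuclideanSpace ℝ (Fin n) | S.Fobj z ≤ S.Feps (S.x 0) (S.eps 0)}) :
    Antitone (fun k => S.Feps (S.x k) (S.eps k)) ∧
    (∀ k : ℕ, S.Feps (S.x 0) (S.eps 0) - S.Feps (S.x k) (S.eps k) ≥
      S.gam * ∑ t ∈ Finset.range k, ‖S.x (t + 1) - S.x t‖ ^ 2) ∧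
    Tendsto (fun k : ℕ => ‖S.x (k + 1) - S.x k‖) atTop (nhds 0) ∧
    ∃ C > (0 : ℝ), ∀ (k : ℕ) (i : Fin n), |gradient (S.Q k) (S.x (k + 1)) i| ≤ C := by
  -- monotonicity
  have hdesc := descent S
  have hanti : Antitone (fun k => S.Feps (S.x k) (S.eps k)) := by
    apply antitone_nat_of_succ_le
    intro k
    have := hdesc k
    nlinarith [sq_nonneg ‖S.x (k + 1) - S.x k‖, S.hgam.le,
      mul_nonneg S.hgam.le (sq_nonneg ‖S.x (k + 1) - S.x k‖)]
  have hsum : ∀ k : ℕ, S.Feps (S.x 0) (S.eps 0) - S.Feps (S.x k) (S.eps k) ≥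
      S.gam * ∑ t ∈ Finset.range k, ‖S.x (t + 1) - S.x t‖ ^ 2 := by
    intro k
    induction k with
    | zero => simp
    | succ k ih =>
      have := hdesc k
      rw [Finset.sum_range_succ, mul_add]
      linarith
  -- all iterates in the level set
  have hmem : ∀ k, S.x k ∈ {z : EuclideanSpace ℝ (Fin n) |
      S.Fobj z ≤ S.Feps (S.x 0) (S.eps 0)} := by
    intro k
    have h1 : S.Fobj (S.x k) ≤ S.Feps (S.x k) (S.eps k) :=
      Fobj_le_Feps S (S.x k) (S.eps k) (S.heps_pos k)
    have h2 : S.Feps (S.x k) (S.eps k) ≤ S.Feps (S.x 0) (S.eps 0) :=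
      hanti (Nat.zero_le k)
    exact le_trans h1 h2
  obtain ⟨R0, hR0⟩ := isBounded_iff_forall_norm_le.mp hbdd
  set R : ℝ := max R0 0 with hRdef
  have hR : ∀ k, ‖S.x k‖ ≤ R := fun k => (hR0 _ (hmem k)).trans (le_max_left _ _)
  have hRnn : (0:ℝ) ≤ R := le_max_right _ _
  -- lower bound on f over the level set
  have hcpt : IsCompact (Metric.closedBall (0 : EuclideanSpace ℝ (Fin n)) R) :=
    isCompact_closedBall _ _
  obtain ⟨z0, hz0mem, hz0⟩ := hcpt.exists_isMinOn
    (Metric.nonempty_closedBall.mpr hRnn) (S.hf_diff.continuous.continuousOn)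
  have hlow : ∀ k, S.f z0 ≤ S.Feps (S.x k) (S.eps k) := by
    intro k
    have h1 : S.f (S.x k) ≤ S.Feps (S.x k) (S.eps k) := by
      unfold IRL1LS.Feps
      have : (0:ℝ) ≤ ∑ i, (|S.x k i| + S.eps k i) ^ S.p := by
        apply Finset.sum_nonneg
        intro i _
        exact Real.rpow_nonneg (by linarith [abs_nonneg (S.x k i), S.heps_pos k i]) _
      nlinarith [S.hlam.le]
    have h2 : S.f z0 ≤ S.f (S.x k) := by
      apply hz0
      simp only [Metric.mem_closedBall, dist_zero_right]
      exact hR k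
    linarith
  -- summability and convergence to zero
  have hsummable : Summable (fun t : ℕ => ‖S.x (t + 1) - S.x t‖ ^ 2) := by
    apply summable_of_sum_range_le (c := (S.Feps (S.x 0) (S.eps 0) - S.f z0) / S.gam)
      (fun t => sq_nonneg _)
    intro k
    have h1 := hsum k
    have h2 := hlow k
    rw [le_div_iff₀ S.hgam]
    nlinarith
  have htend2 : Tendsto (fun t : ℕ => ‖S.x (t + 1) - S.x t‖ ^ 2) atTop (nhds 0) :=
    hsummable.tendsto_atTop_zero
  have htend : Tendsto (fun t : ℕ => ‖S.x (t + 1) - S.x t‖) atTop (nhds 0) := by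
    have h := (Real.continuous_sqrt.tendsto 0).comp htend2
    simp only [Function.comp_def, Real.sqrt_zero] at h
    convert h using 2 with t
    rw [Real.sqrt_sq (norm_nonneg _)]
  -- gradient bound
  refine ⟨hanti, hsum, htend, |S.L| * (2 * R) + S.Lf * R + ‖gradient S.f 0‖ + 1, ?_, ?_⟩
  · nlinarith [abs_nonneg S.L, hRnn, S.hLf, norm_nonneg (gradient S.f 0),
      mul_nonneg (abs_nonneg S.L) (by linarith : (0:ℝ) ≤ 2 * R), mul_nonneg S.hLf hRnn]
  intro k i
  have hd : ‖S.x (k + 1) - S.x k‖ ≤ 2 * R := by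
    calc ‖S.x (k + 1) - S.x k‖ ≤ ‖S.x (k + 1)‖ + ‖S.x k‖ := norm_sub_le _ _
      _ ≤ 2 * R := by linarith [hR (k + 1), hR k]
  have h1 : ‖gradient (S.Q k) (S.x (k + 1)) - gradient (S.Q k) (S.x k)‖ ≤ |S.L| * (2 * R) := by
    calc ‖gradient (S.Q k) (S.x (k + 1)) - gradient (S.Q k) (S.x k)‖
        ≤ S.L * ‖S.x (k + 1) - S.x k‖ := S.hQ_lip k _ _
      _ ≤ |S.L| * ‖S.x (k + 1) - S.x k‖ :=
          mul_le_mul_of_nonneg_right (le_abs_self _) (norm_nonneg _)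
      _ ≤ |S.L| * (2 * R) := mul_le_mul_of_nonneg_left hd (abs_nonneg _)
  have h2 : ‖gradient S.f (S.x k)‖ ≤ S.Lf * R + ‖gradient S.f 0‖ := by
    have := S.hf_lip (S.x k) 0
    rw [sub_zero] at this
    calc ‖gradient S.f (S.x k)‖
        ≤ ‖gradient S.f (S.x k) - gradient S.f 0‖ + ‖gradient S.f 0‖ := by
          simpa using norm_add_le (gradient S.f (S.x k) - gradient S.f 0) (gradient S.f 0)
      _ ≤ S.Lf * R + ‖gradient S.f 0‖ := by
          have h3 : S.Lf * ‖S.x k‖ ≤ S.Lf * R := mul_le_mul_of_nonneg_left (hR k) S.hLf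
          linarith
  have h4 : ‖gradient (S.Q k) (S.x (k + 1))‖ ≤ |S.L| * (2 * R) + S.Lf * R + ‖gradient S.f 0‖ := by
    calc ‖gradient (S.Q k) (S.x (k + 1))‖
        ≤ ‖gradient (S.Q k) (S.x (k + 1)) - gradient (S.Q k) (S.x k)‖ +
            ‖gradient S.f (S.x k)‖ := by
          rw [← S.hQ_grad k]
          simpa using norm_add_le (gradient (S.Q k) (S.x (k + 1)) - gradient (S.Q k) (S.x k))
            (gradient (S.Q k) (S.x k))
      _ ≤ |S.L| * (2 * R) + (S.Lf * R + ‖gradient S.f 0‖) := add_le_add h1 h2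
      _ = _ := by ring
  have h5 := coord_le_norm (gradient (S.Q k) (S.x (k + 1))) i
  linarith
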